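/- Let C > 0, δ > 0 and T ≥ 0. Let f : [0,T] → ℝ be twice continuously differentiable with f(0) = 0, f''(t) ≥ C for all t ∈ [0,T], and f(t) ≤ δ for all t ∈ [0,T]. Then T ≤ 2|f'(0)|/C + 2√(2δ/C). -/

import Mathlib

open Set

/-- Auxiliary: monotone from derivative bound on Icc. -/
lemma aux_mono (T : ℝ) (g g' : ℝ → ℝ)
    (hg : ∀ t ∈ Set.Icc (0:ℝ) T, HasDerivAt g (g' t) t)
    (hpos : ∀ t ∈ Set.Icc (0:ℝ) T, 0 ≤ g' t) :
    MonotoneOn g (Set.Icc (0:ℝ) T) := by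
  apply monotoneOn_of_deriv_nonneg (convex_Icc 0 T)
  · exact fun x hx => (hg x hx).continuousAt.continuousWithinAt
  · intro x hx
    rw [interior_Icc] at hx
    exact (hg x (Set.mem_Icc_of_Ioo hx)).differentiableAt.differentiableWithinAt
  · intro x hx
    rw [interior_Icc] at hx
    rw [(hg x (Set.mem_Icc_of_Ioo hx)).deriv]
    exact hpos x (Set.mem_Icc_of_Ioo hx)

/-- **Escape-time estimate at a non-degenerate tangency.**
If `f(0) = 0`, `f'' ≥ C > 0` and `f ≤ δ` on `[0,T]`, then `T ≤ 2|f'(0)|/C + 2√(2δ/C)`. -/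
theorem stmt_4 (C δ T : ℝ) (hC : 0 < C) (hδ : 0 < δ) (hT : 0 ≤ T)
    (f f' f'' : ℝ → ℝ)
    (hf : ∀ t ∈ Set.Icc (0:ℝ) T, HasDerivAt f (f' t) t)
    (hf' : ∀ t ∈ Set.Icc (0:ℝ) T, HasDerivAt f' (f'' t) t)
    (hf''c : ContinuousOn f'' (Set.Icc 0 T))
    (h0 : f 0 = 0)
    (hlow : ∀ t ∈ Set.Icc (0:ℝ) T, C ≤ f'' t)
    (hup : ∀ t ∈ Set.Icc (0:ℝ) T, f t ≤ δ) :
    T ≤ 2 * |f' 0| / C + 2 * Real.sqrt (2 * δ / C) := by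
  have hmem0 : (0:ℝ) ∈ Set.Icc (0:ℝ) T := ⟨le_refl _, hT⟩
  have hmemT : T ∈ Set.Icc (0:ℝ) T := ⟨hT, le_refl _⟩
  -- step 1: f' t ≥ f' 0 + C t on [0,T]
  have h1 : ∀ t ∈ Set.Icc (0:ℝ) T, f' 0 + C * t ≤ f' t := by
    have hm : MonotoneOn (fun t => f' t - C * t) (Set.Icc 0 T) := by
      apply aux_mono T _ (fun t => f'' t - C)
      · intro t ht
        have h := (hf' t ht).sub ((hasDerivAt_id t).const_mul C)
        exact h.congr_deriv (by ring)
      · intro t ht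
        have := hlow t ht; linarith
    intro t ht
    have := hm hmem0 ht ht.1
    simp only [mul_zero, sub_zero] at this
    linarith
  -- step 2: f t ≥ f' 0 * t + C t^2/2 on [0,T]
  have h2 : f' 0 * T + C * T ^ 2 / 2 ≤ f T := by
    have hm : MonotoneOn (fun t => f t - f' 0 * t - C * t ^ 2 / 2) (Set.Icc 0 T) := by
      apply aux_mono T _ (fun t => f' t - f' 0 - C * t)
      · intro t ht
        have h := ((hf t ht).sub ((hasDerivAt_id t).const_mul (f' 0))).sub
          (((hasDerivAt_pow 2 t).const_mul C).div_const 2)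
        exact h.congr_deriv (by norm_num; ring)
      · intro t ht
        have := h1 t ht; linarith
    have := hm hmem0 hmemT hT
    simp only [mul_zero, sub_zero, h0] at this
    norm_num at this
    linarith
  -- step 3: algebra
  have hδT := hup T hmemT
  set s := Real.sqrt (2 * δ / C) with hs
  have hs0 : 0 < s := Real.sqrt_pos.mpr (by positivity)
  have hs2 : s ^ 2 = 2 * δ / C := Real.sq_sqrt (by positivity)
  have habs : -|f' 0| ≤ f' 0 := neg_abs_le _
  have habs0 : 0 ≤ |f' 0| := abs_nonneg _
  by_contra hcon
  push_neg at hcon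
  have hCs2 : C * s ^ 2 = 2 * δ := by
    rw [hs2]; field_simp
  have hTgt : 2 * |f' 0| / C + 2 * s < T := hcon
  have hmul := mul_lt_mul_of_pos_right hcon hC
  have hcancel : 2 * |f' 0| / C * C = 2 * |f' 0| := div_mul_cancel₀ _ hC.ne'
  have hCT : 2 * |f' 0| + 2 * C * s < C * T := by nlinarith
  have hT2s : 2 * s < T := by nlinarith
  have hprod := mul_lt_mul'' hT2s hCT (by positivity) (by positivity)
  nlinarith [mul_le_mul_of_nonneg_left habs hT, mul_nonneg habs0 hT]
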